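/- Let $\{q_i\}_{i\ge0}$ be i.i.d. real random variables and $\{S_i\}$ an independent simple random walk on $\mathbb{Z}^d$. If $d\ge 2$ and the quantity $\mathbb{E}q_0^+$ and $\mathbb{E}q_0^-$ are finite, then almost surely $\liminf_{N\to\infty}\frac1N\ln Z_N(\beta) \ge \beta\,\frac{(\mathbb{E}q_0^+)^2+(\mathbb{E}q_0^-)^2}{2} - \ln(2d)$ for every $\beta\in\mathbb{R}$, where $Z_N(\beta)=\mathbb{E}[\exp(\beta H_N/N)\mid q_0,\dots,q_{N-1}]$. -/

import Mathlib

open MeasureTheory ProbabilityTheory Filter Finset Real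
open scoped ENNReal Topology

noncomputable section

/-- `v` is a unit step in `ℤ^d` (one of the `2d` nearest-neighbor increments). -/
def IsUnitStep {d : ℕ} (v : Fin d → ℤ) : Prop := (∑ j, |v j|) = 1

/-- `S` is a simple symmetric random walk on `ℤ^d` started at `0` under `P`:
each sequence of admissible increments has probability `(2d)⁻ⁿ`. -/
def IsSRW {Ω : Type*} [MeasurableSpace Ω] (P : Measure Ω) {d : ℕ}
    (S : ℕ → Ω → Fin d → ℤ) : Prop :=
  (∀ i, Measurable (S i)) ∧ (∀ ω, S 0 ω = 0) ∧
  ∀ (n : ℕ) (v : Fin n → Fin d → ℤ), (∀ i, IsUnitStep (v i)) →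
    P {ω | ∀ i : Fin n, S (i + 1) ω - S i ω = v i} = (1 / (2 * d) : ℝ≥0∞) ^ n

/-- Local time of the walk at site `x` up to time `N - 1`. -/
def locCount {Ω : Type*} {d : ℕ} (S : ℕ → Ω → Fin d → ℤ) (N : ℕ)
    (x : Fin d → ℤ) (ω : Ω) : ℕ :=
  ((Finset.range N).filter (fun i => S i ω = x)).card

/-- Total charge at site `x` for charges `q` and path `S`, among monomers `0 ≤ i < N`. -/
def Qof {d : ℕ} (N : ℕ) (q : ℕ → ℝ) (S : ℕ → Fin d → ℤ) (x : Fin d → ℤ) : ℝ :=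
  ∑ i ∈ Finset.range N, if S i = x then q i else 0

/-- Energy `H_N = ∑_x (Q_N^x)²` (the sum over all of `ℤ^d` reduces to visited sites). -/
def Hof {d : ℕ} (N : ℕ) (q : ℕ → ℝ) (S : ℕ → Fin d → ℤ) : ℝ :=
  ∑ x ∈ (Finset.range N).image S, (Qof N q S x) ^ 2

/-- Quenched partition function of the charged polymer: the charges live on
`(Ωq, Pq)`, the walk on `(Ωs, Ps)`, and `Z N β ωq = E_S[exp(β H_N / N)]`. -/
def Zq {d : ℕ} {Ωq Ωs : Type*} [MeasurableSpace Ωs] (Ps : Measure Ωs)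
    (q : ℕ → Ωq → ℝ) (S : ℕ → Ωs → Fin d → ℤ) (N : ℕ) (β : ℝ) (ωq : Ωq) : ℝ :=
  ∫ ωs, Real.exp (β * Hof N (fun i => q i ωq) (fun i => S i ωs) / N) ∂Ps

lemma isUnitStep_single {d : ℕ} (k : Fin d) {c : ℤ} (hc : |c| = 1) :
    IsUnitStep (Pi.single k c) := by
  unfold IsUnitStep
  rw [Fintype.sum_eq_single k (fun j hj => by simp [Pi.single_apply, hj])]
  simpa using hc

lemma IsUnitStep.neg {d : ℕ} {v : Fin d → ℤ} (h : IsUnitStep v) : IsUnitStep (-v) := by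
  simpa [IsUnitStep, abs_neg] using h

open scoped Classical in
/-- The strategy path: 4 sites `0, e₁+e₂` (even times) and `e₁, e₂` (odd times). -/
def pathQ {d : ℕ} (e₁ e₂ : Fin d → ℤ) (q : ℕ → ℝ) (i : ℕ) : Fin d → ℤ :=
  if Even i then (if (0 ≤ q i ↔ 0 ≤ q 0) then 0 else e₁ + e₂)
  else (if 0 ≤ q i then e₁ else e₂)

lemma pathQ_zero {d : ℕ} (e₁ e₂ : Fin d → ℤ) (q : ℕ → ℝ) : pathQ e₁ e₂ q 0 = 0 := by
  simp [pathQ]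

lemma pathQ_step {d : ℕ} {k₀ k₁ : Fin d} (hk : k₀ ≠ k₁) (q : ℕ → ℝ) (i : ℕ) :
    IsUnitStep (pathQ (Pi.single k₀ 1) (Pi.single k₁ 1) q (i + 1)
      - pathQ (Pi.single k₀ 1) (Pi.single k₁ 1) q i) := by
  classical
  set e₁ : Fin d → ℤ := Pi.single k₀ 1
  set e₂ : Fin d → ℤ := Pi.single k₁ 1
  have h1 : IsUnitStep e₁ := isUnitStep_single k₀ (by norm_num)
  have h2 : IsUnitStep e₂ := isUnitStep_single k₁ (by norm_num)
  have key : ∀ u w : Fin d → ℤ, (u = 0 ∨ u = e₁ + e₂) → (w = e₁ ∨ w = e₂) →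
      IsUnitStep (w - u) ∧ IsUnitStep (u - w) := by
    rintro u w (rfl | rfl) (rfl | rfl)
    · exact ⟨by simpa using h1, by simpa [IsUnitStep, abs_neg] using h1.neg⟩
    · exact ⟨by simpa using h2, by simpa using h2.neg⟩
    · constructor
      · have : e₁ - (e₁ + e₂) = -e₂ := by abel
        rw [this]; exact h2.neg
      · have : (e₁ + e₂) - e₁ = e₂ := by abel
        rw [this]; exact h2
    · constructor
      · have : e₂ - (e₁ + e₂) = -e₁ := by abel
        rw [this]; exact h1.neg
      · have : (e₁ + e₂) - e₂ = e₁ := by abel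
        rw [this]; exact h1
  rcases Nat.even_or_odd i with he | ho
  · have ho' : ¬ Even (i + 1) := by simpa [Nat.even_add_one] using he
    have hu : pathQ e₁ e₂ q i = 0 ∨ pathQ e₁ e₂ q i = e₁ + e₂ := by
      unfold pathQ; rw [if_pos he]; split_ifs <;> simp
    have hw : pathQ e₁ e₂ q (i+1) = e₁ ∨ pathQ e₁ e₂ q (i+1) = e₂ := by
      unfold pathQ; rw [if_neg ho']; split_ifs <;> simp
    exact (key _ _ hu hw).1
  · have he' : Even (i + 1) := by simpa [Nat.even_add_one] using (Nat.not_even_iff_odd.mpr ho)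
    have hu : pathQ e₁ e₂ q (i+1) = 0 ∨ pathQ e₁ e₂ q (i+1) = e₁ + e₂ := by
      unfold pathQ; rw [if_pos he']; split_ifs <;> simp
    have hw : pathQ e₁ e₂ q i = e₁ ∨ pathQ e₁ e₂ q i = e₂ := by
      unfold pathQ; rw [if_neg (Nat.not_even_iff_odd.mpr ho)]; split_ifs <;> simp
    exact (key _ _ hu hw).2

lemma sum_range_even (g : ℕ → ℝ) (N : ℕ) :
    ∑ i ∈ Finset.range N, (if Even i then g i else 0)
      = ∑ k ∈ Finset.range ((N + 1) / 2), g (2 * k) := by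
  induction N with
  | zero => simp
  | succ n ih =>
    rw [Finset.sum_range_succ, ih]
    rcases Nat.even_or_odd n with he | ho
    · obtain ⟨m, rfl⟩ := he
      have h1 : (m + m + 1 + 1) / 2 = (m + m + 1) / 2 + 1 := by omega
      have h2 : (m + m + 1) / 2 = m := by omega
      rw [if_pos ⟨m, rfl⟩, h1, Finset.sum_range_succ, h2, show 2 * m = m + m by ring]
    · obtain ⟨m, rfl⟩ := ho
      have h1 : (2 * m + 1 + 1 + 1) / 2 = (2 * m + 1 + 1) / 2 := by omega
      rw [if_neg (by simpa [Nat.even_add_one] using (Nat.not_even_iff_odd.mpr ⟨m, rfl⟩)), h1, add_zero]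

lemma sum_range_odd (g : ℕ → ℝ) (N : ℕ) :
    ∑ i ∈ Finset.range N, (if Even i then 0 else g i)
      = ∑ k ∈ Finset.range (N / 2), g (2 * k + 1) := by
  induction N with
  | zero => simp
  | succ n ih =>
    rw [Finset.sum_range_succ, ih]
    rcases Nat.even_or_odd n with he | ho
    · have h1 : (n + 1) / 2 = n / 2 := by obtain ⟨m, rfl⟩ := he; omega
      rw [if_pos he, h1, add_zero]
    · obtain ⟨m, rfl⟩ := ho
      have h1 : (2 * m + 1 + 1) / 2 = (2 * m + 1) / 2 + 1 := by omega
      have h2 : (2 * m + 1) / 2 = m := by omega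
      rw [if_neg (Nat.not_even_iff_odd.mpr ⟨m, rfl⟩), h1, Finset.sum_range_succ, h2]

lemma Qof_eq_zero_of_not_mem {d N : ℕ} {q : ℕ → ℝ} {S : ℕ → Fin d → ℤ} {x : Fin d → ℤ}
    (hx : x ∉ (Finset.range N).image S) : Qof N q S x = 0 := by
  apply Finset.sum_eq_zero
  intro i hi
  refine if_neg (fun h => hx ?_)
  rw [← h]
  exact Finset.mem_image_of_mem S hi

lemma Hof_eq_sum_subset {d N : ℕ} {q : ℕ → ℝ} {S : ℕ → Fin d → ℤ}
    {T : Finset (Fin d → ℤ)} (hT : (Finset.range N).image S ⊆ T) :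
    Hof N q S = ∑ x ∈ T, (Qof N q S x) ^ 2 :=
  Finset.sum_subset hT (fun x _ hx => by rw [Qof_eq_zero_of_not_mem hx]; ring)

open scoped Classical in
lemma Hof_pathQ {d : ℕ} {k₀ k₁ : Fin d} (hk : k₀ ≠ k₁) (q : ℕ → ℝ) (N : ℕ) :
    Hof N q (pathQ (Pi.single k₀ 1) (Pi.single k₁ 1) q)
      = (∑ i ∈ Finset.range N, if Even i then max (q i) 0 else 0) ^ 2
      + (∑ i ∈ Finset.range N, if Even i then min (q i) 0 else 0) ^ 2
      + (∑ i ∈ Finset.range N, if Even i then 0 else max (q i) 0) ^ 2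
      + (∑ i ∈ Finset.range N, if Even i then 0 else min (q i) 0) ^ 2 := by
  set e₁ : Fin d → ℤ := Pi.single k₀ 1 with he₁
  set e₂ : Fin d → ℤ := Pi.single k₁ 1 with he₂
  set P := pathQ e₁ e₂ q with hP
  have hne10 : e₁ ≠ 0 := fun h => by have := congrFun h k₀; simp [he₁] at this
  have hne20 : e₂ ≠ 0 := fun h => by have := congrFun h k₁; simp [he₂] at this
  have hne120 : e₁ + e₂ ≠ 0 := fun h => by
    have := congrFun h k₀; simp [he₁, he₂, Pi.single_apply, hk, hk.symm] at this
  have hne12 : e₁ ≠ e₂ := fun h => by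
    have := congrFun h k₀; simp [he₁, he₂, Pi.single_apply, hk, hk.symm] at this
  have hne121 : e₁ + e₂ ≠ e₁ := fun h => by
    have := congrFun h k₁; simp [he₁, he₂, Pi.single_apply, hk, hk.symm] at this
  have hne122 : e₁ + e₂ ≠ e₂ := fun h => by
    have := congrFun h k₀; simp [he₁, he₂, Pi.single_apply, hk, hk.symm] at this
  have hsub : (Finset.range N).image P ⊆ ({0, e₁ + e₂, e₁, e₂} : Finset _) := by
    intro x hx
    obtain ⟨i, -, rfl⟩ := Finset.mem_image.mp hx
    simp only [Finset.mem_insert, Finset.mem_singleton, hP, pathQ]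
    split_ifs <;> tauto
  have hHof : Hof N q P = (Qof N q P 0) ^ 2 + (Qof N q P (e₁ + e₂)) ^ 2
      + (Qof N q P e₁) ^ 2 + (Qof N q P e₂) ^ 2 := by
    rw [Hof_eq_sum_subset hsub]
    rw [Finset.sum_insert (by
      simp only [Finset.mem_insert, Finset.mem_singleton]
      rintro (h | h | h)
      exacts [hne120 h.symm, hne10 h.symm, hne20 h.symm])]
    rw [Finset.sum_insert (by
      simp only [Finset.mem_insert, Finset.mem_singleton]
      rintro (h | h)
      exacts [hne121 h, hne122 h])]
    rw [Finset.sum_insert (by simpa using hne12), Finset.sum_singleton]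
    ring
  have hQ0 : Qof N q P 0
      = ∑ i ∈ Finset.range N, if Even i then (if (0 ≤ q i ↔ 0 ≤ q 0) then q i else 0) else 0 := by
    apply Finset.sum_congr rfl
    intro i _
    by_cases he : Even i
    · rw [if_pos he]
      by_cases hc : (0 ≤ q i ↔ 0 ≤ q 0)
      · rw [if_pos hc]
        have : P i = 0 := by rw [hP]; unfold pathQ; rw [if_pos he, if_pos hc]
        rw [if_pos this]
      · rw [if_neg hc]
        have : P i ≠ 0 := by
          rw [hP]; unfold pathQ; rw [if_pos he, if_neg hc]; exact hne120
        rw [if_neg this]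
    · rw [if_neg he]
      have : P i ≠ 0 := by
        rw [hP]; unfold pathQ; rw [if_neg he]; split_ifs; exacts [hne10, hne20]
      rw [if_neg this]
  have hQ12 : Qof N q P (e₁ + e₂)
      = ∑ i ∈ Finset.range N, if Even i then (if (0 ≤ q i ↔ 0 ≤ q 0) then 0 else q i) else 0 := by
    apply Finset.sum_congr rfl
    intro i _
    by_cases he : Even i
    · rw [if_pos he]
      by_cases hc : (0 ≤ q i ↔ 0 ≤ q 0)
      · rw [if_pos hc]
        have : P i ≠ e₁ + e₂ := by
          rw [hP]; unfold pathQ; rw [if_pos he, if_pos hc]; exact fun h => hne120 h.symm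
        rw [if_neg this]
      · rw [if_neg hc]
        have : P i = e₁ + e₂ := by rw [hP]; unfold pathQ; rw [if_pos he, if_neg hc]
        rw [if_pos this]
    · rw [if_neg he]
      have : P i ≠ e₁ + e₂ := by
        rw [hP]; unfold pathQ; rw [if_neg he]; split_ifs
        exacts [fun h => hne121 h.symm, fun h => hne122 h.symm]
      rw [if_neg this]
  have hQ1 : Qof N q P e₁
      = ∑ i ∈ Finset.range N, if Even i then 0 else (if 0 ≤ q i then q i else 0) := by
    apply Finset.sum_congr rfl
    intro i _
    by_cases he : Even i
    · rw [if_pos he]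
      have : P i ≠ e₁ := by
        rw [hP]; unfold pathQ; rw [if_pos he]; split_ifs
        exacts [fun h => hne10 h.symm, hne121]
      rw [if_neg this]
    · rw [if_neg he]
      by_cases hc : 0 ≤ q i
      · rw [if_pos hc]
        have : P i = e₁ := by rw [hP]; unfold pathQ; rw [if_neg he, if_pos hc]
        rw [if_pos this]
      · rw [if_neg hc]
        have : P i ≠ e₁ := by
          rw [hP]; unfold pathQ; rw [if_neg he, if_neg hc]; exact fun h => hne12 h.symm
        rw [if_neg this]
  have hQ2 : Qof N q P e₂
      = ∑ i ∈ Finset.range N, if Even i then 0 else (if 0 ≤ q i then 0 else q i) := by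
    apply Finset.sum_congr rfl
    intro i _
    by_cases he : Even i
    · rw [if_pos he]
      have : P i ≠ e₂ := by
        rw [hP]; unfold pathQ; rw [if_pos he]; split_ifs
        exacts [fun h => hne20 h.symm, hne122]
      rw [if_neg this]
    · rw [if_neg he]
      by_cases hc : 0 ≤ q i
      · rw [if_pos hc]
        have : P i ≠ e₂ := by
          rw [hP]; unfold pathQ; rw [if_neg he, if_pos hc]; exact hne12
        rw [if_neg this]
      · rw [if_neg hc]
        have : P i = e₂ := by rw [hP]; unfold pathQ; rw [if_neg he, if_neg hc]
        rw [if_pos this]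
  have hmax : ∀ x : ℝ, (if 0 ≤ x then x else 0) = max x 0 := by
    intro x; split_ifs with h
    · exact (max_eq_left h).symm
    · exact (max_eq_right (le_of_not_ge h)).symm
  have hmin : ∀ x : ℝ, (if 0 ≤ x then 0 else x) = min x 0 := by
    intro x; split_ifs with h
    · exact (min_eq_right h).symm
    · exact (min_eq_left (le_of_not_ge h)).symm
  by_cases h0 : 0 ≤ q 0
  · have c1 : Qof N q P 0 = ∑ i ∈ Finset.range N, if Even i then max (q i) 0 else 0 := by
      rw [hQ0]; apply Finset.sum_congr rfl; intro i _
      by_cases he : Even i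
      · rw [if_pos he, if_pos he, ← hmax (q i)]
        by_cases hc : 0 ≤ q i
        · rw [if_pos (iff_of_true hc h0), if_pos hc]
        · rw [if_neg (fun hiff => hc (hiff.mpr h0)), if_neg hc]
      · rw [if_neg he, if_neg he]
    have c2 : Qof N q P (e₁ + e₂) = ∑ i ∈ Finset.range N, if Even i then min (q i) 0 else 0 := by
      rw [hQ12]; apply Finset.sum_congr rfl; intro i _
      by_cases he : Even i
      · rw [if_pos he, if_pos he, ← hmin (q i)]
        by_cases hc : 0 ≤ q i
        · rw [if_pos (iff_of_true hc h0), if_pos hc]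
        · rw [if_neg (fun hiff => hc (hiff.mpr h0)), if_neg hc]
      · rw [if_neg he, if_neg he]
    have c3 : Qof N q P e₁ = ∑ i ∈ Finset.range N, if Even i then 0 else max (q i) 0 := by
      rw [hQ1]; apply Finset.sum_congr rfl; intro i _
      by_cases he : Even i
      · rw [if_pos he, if_pos he]
      · rw [if_neg he, if_neg he, hmax]
    have c4 : Qof N q P e₂ = ∑ i ∈ Finset.range N, if Even i then 0 else min (q i) 0 := by
      rw [hQ2]; apply Finset.sum_congr rfl; intro i _
      by_cases he : Even i
      · rw [if_pos he, if_pos he]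
      · rw [if_neg he, if_neg he, hmin]
    rw [hHof, c1, c2, c3, c4]
  · have c1 : Qof N q P 0 = ∑ i ∈ Finset.range N, if Even i then min (q i) 0 else 0 := by
      rw [hQ0]; apply Finset.sum_congr rfl; intro i _
      by_cases he : Even i
      · rw [if_pos he, if_pos he, ← hmin (q i)]
        by_cases hc : 0 ≤ q i
        · rw [if_neg (fun hiff => h0 (hiff.mp hc)), if_pos hc]
        · rw [if_pos (iff_of_false hc h0), if_neg hc]
      · rw [if_neg he, if_neg he]
    have c2 : Qof N q P (e₁ + e₂) = ∑ i ∈ Finset.range N, if Even i then max (q i) 0 else 0 := by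
      rw [hQ12]; apply Finset.sum_congr rfl; intro i _
      by_cases he : Even i
      · rw [if_pos he, if_pos he, ← hmax (q i)]
        by_cases hc : 0 ≤ q i
        · rw [if_neg (fun hiff => h0 (hiff.mp hc)), if_pos hc]
        · rw [if_pos (iff_of_false hc h0), if_neg hc]
      · rw [if_neg he, if_neg he]
    have c3 : Qof N q P e₁ = ∑ i ∈ Finset.range N, if Even i then 0 else max (q i) 0 := by
      rw [hQ1]; apply Finset.sum_congr rfl; intro i _
      by_cases he : Even i
      · rw [if_pos he, if_pos he]
      · rw [if_neg he, if_neg he, hmax]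
    have c4 : Qof N q P e₂ = ∑ i ∈ Finset.range N, if Even i then 0 else min (q i) 0 := by
      rw [hQ2]; apply Finset.sum_congr rfl; intro i _
      by_cases he : Even i
      · rw [if_pos he, if_pos he]
      · rw [if_neg he, if_neg he, hmin]
    rw [hHof, c1, c2, c3, c4]
    ring

lemma Hof_eq_double {d N : ℕ} (q : ℕ → ℝ) (S : ℕ → Fin d → ℤ) :
    Hof N q S = ∑ i ∈ Finset.range N, ∑ j ∈ Finset.range N,
      (if S i = S j then q i * q j else 0) := by
  unfold Hof Qof
  simp_rw [sq, Finset.sum_mul_sum]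
  rw [Finset.sum_comm]
  apply Finset.sum_congr rfl; intro i hi
  rw [Finset.sum_comm]
  apply Finset.sum_congr rfl; intro j _
  rw [Finset.sum_eq_single_of_mem (S i) (Finset.mem_image_of_mem S hi)]
  · rw [if_pos rfl]
    by_cases h : S i = S j
    · rw [if_pos h.symm, if_pos h]
    · rw [if_neg (fun hh => h hh.symm), if_neg h, mul_zero]
  · intro x _ hxne
    rw [if_neg (Ne.symm hxne), zero_mul]

lemma Hof_congr {d N : ℕ} (q : ℕ → ℝ) {S S' : ℕ → Fin d → ℤ}
    (h : ∀ i < N, S i = S' i) : Hof N q S = Hof N q S' := by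
  rw [Hof_eq_double, Hof_eq_double]
  apply Finset.sum_congr rfl; intro i hi
  apply Finset.sum_congr rfl; intro j hj
  rw [h i (Finset.mem_range.mp hi), h j (Finset.mem_range.mp hj)]

lemma abs_Hof_le {d N : ℕ} (q : ℕ → ℝ) (S : ℕ → Fin d → ℤ) :
    |Hof N q S| ≤ (∑ i ∈ Finset.range N, |q i|) ^ 2 := by
  rw [Hof_eq_double, sq, Finset.sum_mul_sum]
  refine (Finset.abs_sum_le_sum_abs _ _).trans ?_
  apply Finset.sum_le_sum; intro i _
  refine (Finset.abs_sum_le_sum_abs _ _).trans ?_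
  apply Finset.sum_le_sum; intro j _
  split_ifs
  · rw [abs_mul]
  · simp [abs_nonneg, mul_nonneg]

lemma measurable_Hof {d : ℕ} {Ωs : Type*} [MeasurableSpace Ωs] {S : ℕ → Ωs → Fin d → ℤ}
    (hS : ∀ i, Measurable (S i)) (q : ℕ → ℝ) (N : ℕ) :
    Measurable (fun ωs => Hof N q (fun i => S i ωs)) := by
  simp_rw [Hof_eq_double]
  apply Finset.measurable_sum; intro i _
  apply Finset.measurable_sum; intro j _
  exact Measurable.ite (measurableSet_eq_fun (hS i) (hS j))
    measurable_const measurable_const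
lemma Zq_bounds {d : ℕ} {Ωs : Type*} [MeasurableSpace Ωs] (Ps : Measure Ωs)
    [IsProbabilityMeasure Ps] {S : ℕ → Ωs → Fin d → ℤ} (hS : IsSRW Ps S)
    {k₀ k₁ : Fin d} (hk : k₀ ≠ k₁) (q' : ℕ → ℝ) (N : ℕ) (β : ℝ) :
    (1 / (2 * d) : ℝ) ^ N *
        Real.exp (β * Hof N q' (pathQ (Pi.single k₀ 1) (Pi.single k₁ 1) q') / N)
      ≤ ∫ ωs, Real.exp (β * Hof N q' (fun i => S i ωs) / N) ∂Ps
    ∧ ∫ ωs, Real.exp (β * Hof N q' (fun i => S i ωs) / N) ∂Ps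
      ≤ Real.exp (|β| * (∑ i ∈ Finset.range N, |q' i|) ^ 2 / N) := by
  obtain ⟨hSm, hS0, hSP⟩ := hS
  set P : ℕ → Fin d → ℤ := pathQ (Pi.single k₀ 1) (Pi.single k₁ 1) q' with hPdef
  set f : Ωs → ℝ := fun ωs => Real.exp (β * Hof N q' (fun i => S i ωs) / N) with hfdef
  set C : ℝ := Real.exp (|β| * (∑ i ∈ Finset.range N, |q' i|) ^ 2 / N) with hCdef
  have hfm : Measurable f := by
    apply Real.measurable_exp.comp
    exact ((measurable_Hof hSm q' N).const_mul β).div_const N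
  have hbound : ∀ ωs, f ωs ≤ C := by
    intro ωs
    apply Real.exp_le_exp.mpr
    apply div_le_div_of_nonneg_right ?_ (Nat.cast_nonneg N)
    calc β * Hof N q' (fun i => S i ωs) ≤ |β * Hof N q' (fun i => S i ωs)| := le_abs_self _
    _ = |β| * |Hof N q' (fun i => S i ωs)| := abs_mul _ _
    _ ≤ |β| * (∑ i ∈ Finset.range N, |q' i|) ^ 2 :=
        mul_le_mul_of_nonneg_left (abs_Hof_le _ _) (abs_nonneg β)
  have hfi : Integrable f Ps := by
    refine Integrable.mono' (integrable_const C) hfm.aestronglyMeasurable ?_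
    refine ae_of_all _ fun ω => ?_
    rw [Real.norm_eq_abs, abs_of_pos (Real.exp_pos _)]
    exact hbound ω
  constructor
  · set v : Fin N → Fin d → ℤ := fun i => P (i + 1) - P i with hvdef
    set E : Set Ωs := {ω | ∀ i : Fin N, S (i + 1) ω - S i ω = v i} with hEdef
    have hPE : Ps E = (1 / (2 * ↑d) : ℝ≥0∞) ^ N :=
      hSP N v (fun i => pathQ_step hk q' i)
    have hE_meas : MeasurableSet E := by
      have : E = ⋂ i : Fin N, {ω | S (i + 1) ω - S i ω = v i} := by
        ext ω; simp [hEdef, Set.mem_iInter]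
      rw [this]
      exact MeasurableSet.iInter fun i =>
        measurableSet_eq_fun ((hSm _).sub (hSm _)) measurable_const
    have hagree : ∀ ω ∈ E, ∀ i, i ≤ N → S i ω = P i := by
      intro ω hω i
      induction i with
      | zero => intro _; rw [hS0 ω, hPdef, pathQ_zero]
      | succ k ih =>
        intro hkN
        have hklt : k < N := hkN
        have h1 : S (k + 1) ω - S k ω = v ⟨k, hklt⟩ := hω ⟨k, hklt⟩
        have h2 : S (k + 1) ω - S k ω = P (k + 1) - P k := by
          simpa [hvdef] using h1
        rw [ih (le_of_lt hklt)] at h2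
        have h3 := congrArg (· + P k) h2
        simpa using h3
    have hsetint : ∫ ω in E, f ω ∂Ps = (Ps E).toReal * Real.exp (β * Hof N q' P / N) := by
      rw [setIntegral_congr_fun hE_meas (g := fun _ => Real.exp (β * Hof N q' P / N)) ?_]
      · rw [setIntegral_const, smul_eq_mul, measureReal_def]
      · intro ω hω
        simp only [hfdef]
        rw [Hof_congr q' (S' := P) fun i hi => hagree ω hω i (le_of_lt hi)]
    have htoreal : (Ps E).toReal = (1 / (2 * (d : ℝ))) ^ N := by
      rw [hPE, ENNReal.toReal_pow]
      congr 1
      rw [ENNReal.toReal_div]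
      simp
    calc (1 / (2 * (d:ℝ))) ^ N * Real.exp (β * Hof N q' P / N)
        = ∫ ω in E, f ω ∂Ps := by rw [hsetint, htoreal]
      _ ≤ ∫ ω, f ω ∂Ps :=
          setIntegral_le_integral hfi (ae_of_all _ fun ω => (Real.exp_pos _).le)
  · calc ∫ ω, f ω ∂Ps ≤ ∫ _ω, C ∂Ps := integral_mono hfi (integrable_const C) hbound
      _ = C := by simp

lemma avg_sub (u : ℕ → ℝ) (L : ℝ)
    (hu : Tendsto (fun M : ℕ => (∑ k ∈ Finset.range M, u k) / M) atTop (𝓝 L))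
    (c : ℕ → ℕ) (hc1 : ∀ N, N ≤ 2 * c N + 1) (hc2 : ∀ N, 2 * c N ≤ N + 1) :
    Tendsto (fun N : ℕ => (∑ k ∈ Finset.range (c N), u k) / N) atTop (𝓝 (L / 2)) := by
  have hctop : Tendsto c atTop atTop := by
    apply tendsto_atTop_atTop.mpr
    intro b
    exact ⟨2 * b + 2, fun n hn => by have := hc1 n; omega⟩
  have h1 : Tendsto (fun N => (∑ k ∈ Finset.range (c N), u k) / (c N : ℝ)) atTop (𝓝 L) :=
    hu.comp hctop
  have hlo : Tendsto (fun N : ℕ => 1 / 2 - 1 / (2 * (N : ℝ))) atTop (𝓝 (1 / 2)) := by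
    have : Tendsto (fun N : ℕ => 1 / (2 * (N : ℝ))) atTop (𝓝 0) := by
      have h2 : Tendsto (fun N : ℕ => 2 * (N : ℝ)) atTop atTop :=
        (tendsto_natCast_atTop_atTop).const_mul_atTop (by norm_num)
      exact h2.inv_tendsto_atTop.congr (fun N => (one_div _).symm)
    simpa using (tendsto_const_nhds (x := (1:ℝ)/2)).sub this
  have hhi : Tendsto (fun N : ℕ => 1 / 2 + 1 / (2 * (N : ℝ))) atTop (𝓝 (1 / 2)) := by
    have : Tendsto (fun N : ℕ => 1 / (2 * (N : ℝ))) atTop (𝓝 0) := by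
      have h2 : Tendsto (fun N : ℕ => 2 * (N : ℝ)) atTop atTop :=
        (tendsto_natCast_atTop_atTop).const_mul_atTop (by norm_num)
      exact h2.inv_tendsto_atTop.congr (fun N => (one_div _).symm)
    simpa using (tendsto_const_nhds (x := (1:ℝ)/2)).add this
  have h2 : Tendsto (fun N : ℕ => (c N : ℝ) / N) atTop (𝓝 (1 / 2)) := by
    apply tendsto_of_tendsto_of_tendsto_of_le_of_le' hlo hhi
    · filter_upwards [eventually_ge_atTop 1] with N hN
      have hNpos : (0:ℝ) < N := by exact_mod_cast hN
      rw [div_sub_div _ _ (by norm_num) (by positivity), div_le_div_iff₀ (by positivity) hNpos]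
      have := hc1 N
      have : ((N:ℝ)) ≤ 2 * (c N) + 1 := by exact_mod_cast this
      ring_nf
      nlinarith
    · filter_upwards [eventually_ge_atTop 1] with N hN
      have hNpos : (0:ℝ) < N := by exact_mod_cast hN
      rw [div_add_div _ _ (by norm_num) (by positivity), div_le_div_iff₀ hNpos (by positivity)]
      have : (2 * (c N) : ℝ) ≤ N + 1 := by exact_mod_cast hc2 N
      nlinarith
  have heq : (fun N => ((∑ k ∈ Finset.range (c N), u k) / (c N : ℝ)) * ((c N : ℝ) / N))
      =ᶠ[atTop] (fun N => (∑ k ∈ Finset.range (c N), u k) / N) := by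
    filter_upwards [hctop.eventually_ge_atTop 1, eventually_ge_atTop 1] with N hcN hN
    have hc0 : (c N : ℝ) ≠ 0 := Nat.cast_ne_zero.mpr (by omega)
    field_simp
  have := (h1.mul h2).congr' heq
  simpa [div_eq_mul_one_div L 2] using this

lemma slln_comp {Ωq : Type*} [MeasurableSpace Ωq] (Pq : Measure Ωq) [IsProbabilityMeasure Pq]
    (q : ℕ → Ωq → ℝ) (hqm : ∀ i, Measurable (q i))
    (hindep : iIndepFun q Pq)
    (hident : ∀ i, Measure.map (q i) Pq = Measure.map (q 0) Pq)
    (f : ℝ → ℝ) (hf : Measurable f) (hfi : Integrable (fun ω => f (q 0 ω)) Pq) (r : ℕ) :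
    ∀ᵐ ωq ∂Pq, Tendsto (fun M : ℕ => (∑ k ∈ Finset.range M, f (q (2 * k + r) ωq)) / M)
      atTop (𝓝 (∫ ω, f (q 0 ω) ∂Pq)) := by
  have hid : ∀ i, IdentDistrib (q i) (q 0) Pq Pq := fun i =>
    ⟨(hqm i).aemeasurable, (hqm 0).aemeasurable, hident i⟩
  set X : ℕ → Ωq → ℝ := fun k ω => f (q (2 * k + r) ω) with hX
  have hidX : ∀ k, IdentDistrib (X k) (fun ω => f (q 0 ω)) Pq Pq := fun k => (hid _).comp hf
  have hintX : Integrable (X 0) Pq := (hidX 0).integrable_iff.mpr hfi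
  have hindepX : Pairwise (Function.onFun (IndepFun · · Pq) X) := by
    intro i j hij
    have hne : (2 * i + r) ≠ (2 * j + r) := by omega
    exact (hindep.indepFun hne).comp hf hf
  have hlim := strong_law_ae_real X hintX hindepX (fun k => (hidX k).trans (hidX 0).symm)
  have hval : ∫ ω, X 0 ω ∂Pq = ∫ ω, f (q 0 ω) ∂Pq := (hidX 0).integral_eq
  rw [hval] at hlim
  exact hlim

/-- for i.i.d. integrable charges and `d ≥ 2`, almost surely, for
every `β`, `liminf N⁻¹ ln Z_N(β) ≥ β((E q₀⁺)² + (E q₀⁻)²)/2 - ln(2d)`. -/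
theorem liminf_logZ_ge {d : ℕ} (hd : 2 ≤ d) {Ωq Ωs : Type*}
    [MeasurableSpace Ωq] [MeasurableSpace Ωs]
    (Pq : Measure Ωq) [IsProbabilityMeasure Pq]
    (Ps : Measure Ωs) [IsProbabilityMeasure Ps]
    (q : ℕ → Ωq → ℝ) (hqm : ∀ i, Measurable (q i))
    (hindep : iIndepFun q Pq)
    (hident : ∀ i, Measure.map (q i) Pq = Measure.map (q 0) Pq)
    (hint : Integrable (q 0) Pq)
    (S : ℕ → Ωs → Fin d → ℤ) (hS : IsSRW Ps S) :
    ∀ᵐ ωq ∂Pq, ∀ β : ℝ,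
      β * ((∫ ω', max (q 0 ω') 0 ∂Pq) ^ 2 + (∫ ω', max (-q 0 ω') 0 ∂Pq) ^ 2) / 2
          - Real.log (2 * d) ≤
        atTop.liminf (fun N : ℕ => Real.log (Zq Ps q S N β ωq) / N) := by
  obtain ⟨m, rfl⟩ : ∃ m, d = m + 2 := ⟨d - 2, by omega⟩
  set k₀ : Fin (m + 2) := 0 with hk₀
  set k₁ : Fin (m + 2) := 1 with hk₁
  have hk : k₀ ≠ k₁ := by
    intro h
    have := congrArg Fin.val h
    simp [hk₀, hk₁, Fin.val_one] at this
  have hpos_int : Integrable (fun ω => max (q 0 ω) 0) Pq := hint.pos_part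
  have hneg_int : Integrable (fun ω => max (-q 0 ω) 0) Pq := hint.neg.pos_part
  have habs_int : Integrable (fun ω => |q 0 ω|) Pq := hint.abs
  have hmpos : Measurable fun x : ℝ => max x 0 :=
    (continuous_id.max continuous_const).measurable
  have hmneg : Measurable fun x : ℝ => max (-x) 0 :=
    ((continuous_neg).max continuous_const).measurable
  have hmabs : Measurable fun x : ℝ => |x| := continuous_abs.measurable
  have h1 := slln_comp Pq q hqm hindep hident _ hmpos hpos_int 0
  have h2 := slln_comp Pq q hqm hindep hident _ hmpos hpos_int 1
  have h3 := slln_comp Pq q hqm hindep hident _ hmneg hneg_int 0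
  have h4 := slln_comp Pq q hqm hindep hident _ hmneg hneg_int 1
  have h5 := slln_comp Pq q hqm hindep hident _ hmabs habs_int 0
  have h6 := slln_comp Pq q hqm hindep hident _ hmabs habs_int 1
  filter_upwards [h1, h2, h3, h4, h5, h6] with ωq H1 H2 H3 H4 H5 H6
  intro β
  simp only [Nat.add_zero] at H1 H3 H5
  set a : ℝ := ∫ ω', max (q 0 ω') 0 ∂Pq with ha
  set b : ℝ := ∫ ω', max (-q 0 ω') 0 ∂Pq with hb
  set e0 : ℝ := ∫ ω', |q 0 ω'| ∂Pq with he0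
  set q' : ℕ → ℝ := fun i => q i ωq with hq'
  set dR : ℝ := ((m + 2 : ℕ) : ℝ) with hdR
  have hc_even1 : ∀ N : ℕ, N ≤ 2 * ((N + 1) / 2) + 1 := fun N => by omega
  have hc_even2 : ∀ N : ℕ, 2 * ((N + 1) / 2) ≤ N + 1 := fun N => by omega
  have hc_odd1 : ∀ N : ℕ, N ≤ 2 * (N / 2) + 1 := fun N => by omega
  have hc_odd2 : ∀ N : ℕ, 2 * (N / 2) ≤ N + 1 := fun N => by omega
  -- even/odd positive-part averages
  have hA : Tendsto (fun N : ℕ =>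
      (∑ i ∈ Finset.range N, if Even i then max (q' i) 0 else 0) / N) atTop (𝓝 (a / 2)) :=
    (avg_sub _ a H1 (fun N => (N + 1) / 2) hc_even1 hc_even2).congr
      (fun N => by rw [sum_range_even])
  have hB : Tendsto (fun N : ℕ =>
      (∑ i ∈ Finset.range N, if Even i then 0 else max (q' i) 0) / N) atTop (𝓝 (a / 2)) :=
    (avg_sub _ a H2 (fun N => N / 2) hc_odd1 hc_odd2).congr
      (fun N => by rw [sum_range_odd])
  have hCmax : Tendsto (fun N : ℕ =>
      (∑ i ∈ Finset.range N, if Even i then max (-q' i) 0 else 0) / N) atTop (𝓝 (b / 2)) :=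
    (avg_sub _ b H3 (fun N => (N + 1) / 2) hc_even1 hc_even2).congr
      (fun N => by rw [sum_range_even])
  have hDmax : Tendsto (fun N : ℕ =>
      (∑ i ∈ Finset.range N, if Even i then 0 else max (-q' i) 0) / N) atTop (𝓝 (b / 2)) :=
    (avg_sub _ b H4 (fun N => N / 2) hc_odd1 hc_odd2).congr
      (fun N => by rw [sum_range_odd])
  have hEabs : Tendsto (fun N : ℕ =>
      (∑ i ∈ Finset.range N, if Even i then |q' i| else 0) / N) atTop (𝓝 (e0 / 2)) :=
    (avg_sub _ e0 H5 (fun N => (N + 1) / 2) hc_even1 hc_even2).congr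
      (fun N => by rw [sum_range_even])
  have hFabs : Tendsto (fun N : ℕ =>
      (∑ i ∈ Finset.range N, if Even i then 0 else |q' i|) / N) atTop (𝓝 (e0 / 2)) :=
    (avg_sub _ e0 H6 (fun N => N / 2) hc_odd1 hc_odd2).congr
      (fun N => by rw [sum_range_odd])
  have hminmax : ∀ x : ℝ, min x 0 = -max (-x) 0 := fun x => by
    rcases le_total x 0 with h | h
    · rw [min_eq_left h, max_eq_left (by linarith : (0:ℝ) ≤ -x), neg_neg]
    · rw [min_eq_right h, max_eq_right (by linarith : -x ≤ (0:ℝ)), neg_zero]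
  have hC : Tendsto (fun N : ℕ =>
      (∑ i ∈ Finset.range N, if Even i then min (q' i) 0 else 0) / N) atTop (𝓝 (-(b / 2))) := by
    refine hCmax.neg.congr (fun N => ?_)
    rw [show (∑ i ∈ Finset.range N, if Even i then min (q' i) 0 else 0)
        = ∑ i ∈ Finset.range N, -(if Even i then max (-q' i) 0 else 0) from
      Finset.sum_congr rfl fun i _ => by split_ifs <;> simp [hminmax]]
    rw [Finset.sum_neg_distrib, neg_div]
  have hD : Tendsto (fun N : ℕ =>
      (∑ i ∈ Finset.range N, if Even i then 0 else min (q' i) 0) / N) atTop (𝓝 (-(b / 2))) := by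
    refine hDmax.neg.congr (fun N => ?_)
    rw [show (∑ i ∈ Finset.range N, if Even i then 0 else min (q' i) 0)
        = ∑ i ∈ Finset.range N, -(if Even i then 0 else max (-q' i) 0) from
      Finset.sum_congr rfl fun i _ => by split_ifs <;> simp [hminmax]]
    rw [Finset.sum_neg_distrib, neg_div]
  set P : ℕ → Fin (m + 2) → ℤ := pathQ (Pi.single k₀ 1) (Pi.single k₁ 1) q' with hP
  have hH : Tendsto (fun N : ℕ => Hof N q' P / (N : ℝ) ^ 2) atTop
      (𝓝 ((a ^ 2 + b ^ 2) / 2)) := by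
    have t := ((((hA.pow 2).add (hC.pow 2)).add (hB.pow 2)).add (hD.pow 2))
    rw [show (a / 2) ^ 2 + (-(b / 2)) ^ 2 + (a / 2) ^ 2 + (-(b / 2)) ^ 2
        = (a ^ 2 + b ^ 2) / 2 by ring] at t
    refine t.congr (fun N => ?_)
    rw [hP, Hof_pathQ hk q' N, div_pow, div_pow, div_pow, div_pow]
    ring
  have hABS : Tendsto (fun N : ℕ => (∑ i ∈ Finset.range N, |q' i|) / N) atTop (𝓝 e0) := by
    have t := hEabs.add hFabs
    rw [show e0 / 2 + e0 / 2 = e0 by ring] at t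
    refine t.congr (fun N => ?_)
    rw [← add_div, ← Finset.sum_add_distrib]
    congr 1
    refine Finset.sum_congr rfl fun i _ => by split_ifs <;> simp
  -- bounds on the partition function
  have hZdef : ∀ N : ℕ, Zq Ps q S N β ωq
      = ∫ ωs, Real.exp (β * Hof N q' (fun i => S i ωs) / N) ∂Ps := fun N => rfl
  have keylow : ∀ N : ℕ, 1 ≤ N →
      β * (Hof N q' P / (N : ℝ) ^ 2) - Real.log (2 * dR)
        ≤ Real.log (Zq Ps q S N β ωq) / N := by
    intro N hN
    have hN0 : (N : ℝ) ≠ 0 := Nat.cast_ne_zero.mpr (by omega)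
    have hNpos : (0 : ℝ) < N := Nat.cast_pos.mpr (by omega)
    obtain ⟨hlow, -⟩ := Zq_bounds Ps hS hk q' N β
    rw [← hZdef N] at hlow
    have hZpos : 0 < Zq Ps q S N β ωq := lt_of_lt_of_le (by positivity) hlow
    have hlog := Real.log_le_log (by positivity) hlow
    rw [Real.log_mul (by positivity) (Real.exp_pos _).ne', Real.log_pow, Real.log_exp,
      one_div, Real.log_inv] at hlog
    have hdiv := div_le_div_of_nonneg_right hlog (Nat.cast_nonneg N)
    refine le_trans (le_of_eq ?_) hdiv
    rw [hP]
    generalize Real.log (2 * dR) = lg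
    generalize Hof N q' (pathQ (Pi.single k₀ 1) (Pi.single k₁ 1) q') = HH
    field_simp
    ring
  have keyhigh : ∀ N : ℕ, 1 ≤ N →
      Real.log (Zq Ps q S N β ωq) / N
        ≤ |β| * ((∑ i ∈ Finset.range N, |q' i|) / N) ^ 2 := by
    intro N hN
    have hN0 : (N : ℝ) ≠ 0 := Nat.cast_ne_zero.mpr (by omega)
    obtain ⟨hlow, hhigh⟩ := Zq_bounds Ps hS hk q' N β
    rw [← hZdef N] at hlow hhigh
    have hZpos : 0 < Zq Ps q S N β ωq := lt_of_lt_of_le (by positivity) hlow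
    have hlog := Real.log_le_log hZpos hhigh
    rw [Real.log_exp] at hlog
    have hdiv := div_le_div_of_nonneg_right hlog (Nat.cast_nonneg N)
    refine le_trans hdiv (le_of_eq ?_)
    rw [div_pow]
    ring
  -- boundedness of the liminf sequence
  have hupper_t : Tendsto (fun N : ℕ => |β| * ((∑ i ∈ Finset.range N, |q' i|) / N) ^ 2)
      atTop (𝓝 (|β| * e0 ^ 2)) := (hABS.pow 2).const_mul |β|
  have hbdd : IsBoundedUnder (· ≤ ·) atTop
      (fun N : ℕ => Real.log (Zq Ps q S N β ωq) / N) := by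
    refine ⟨|β| * e0 ^ 2 + 1, ?_⟩
    rw [Filter.eventually_map]
    filter_upwards [eventually_ge_atTop 1,
      hupper_t.eventually (eventually_le_nhds (lt_add_one _))] with N hN hup
    exact le_trans (keyhigh N hN) hup
  have cobdd : IsCoboundedUnder (· ≥ ·) atTop
      (fun N : ℕ => Real.log (Zq Ps q S N β ωq) / N) := hbdd.isCoboundedUnder_ge
  -- conclusion
  have hg : Tendsto (fun N : ℕ => β * (Hof N q' P / (N : ℝ) ^ 2) - Real.log (2 * dR))
      atTop (𝓝 (β * ((a ^ 2 + b ^ 2) / 2) - Real.log (2 * dR))) :=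
    (hH.const_mul β).sub_const _
  rw [show β * (a ^ 2 + b ^ 2) / 2 = β * ((a ^ 2 + b ^ 2) / 2) by ring]
  refine le_of_forall_sub_le fun ε hε => ?_
  refine le_liminf_of_le cobdd ?_
  filter_upwards [eventually_ge_atTop 1,
    hg.eventually (eventually_gt_nhds
      (sub_lt_self _ hε))] with N hN hgN
  exact le_trans hgN.le (keylow N hN)
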